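/- Fix an integer n ≥ 1 and 0 < ε ≤ 1/4. Define ψ_ε : Q → ℝ by ψ_ε(x) = min( ψ⁺(x), 4εn²x₁² + 1/4 − ε ) and S_ε = { x ∈ Q : |x₂| ≤ (ε/n)(1 − 4n²x₁²) }. Then: ψ_ε is Lipschitz; ψ_ε = ψ_∂Q on ∂Q; ψ_ε(x) = 4εn²x₁² + 1/4 − ε if and only if x ∈ S_ε; and for every continuous σ : ℝ² → ℝ, ∫_Q σ(∇ψ⁺(x)) dx − ∫_Q σ(∇ψ_ε(x)) dx = ∫_{S_ε} [ (σ(0,n) + σ(0,−n))/2 − σ(8εn²x₁, 0) ] dx. -/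

import Mathlib

open MeasureTheory

/-- The rescaled Aztec diamond `Q = {x : |x₁| + |x₂| ≤ 1/(2n)}`. -/
def Qset (n : ℕ) : Set (ℝ × ℝ) := {x | |x.1| + |x.2| ≤ 1 / (2 * n)}

/-- The boundary `∂Q = {x : |x₁| + |x₂| = 1/(2n)}`. -/
def bdQ (n : ℕ) : Set (ℝ × ℝ) := {x | |x.1| + |x.2| = 1 / (2 * n)}

/-- The boundary datum `ψ_∂Q(x) = (n/2)(|x₁| − |x₂|)`. -/
noncomputable def psiBd (n : ℕ) (x : ℝ × ℝ) : ℝ := ((n : ℝ) / 2) * (|x.1| - |x.2|)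

/-- `ψ⁺(x) = 1/4 − n|x₂|`. -/
noncomputable def psiPlus (n : ℕ) (x : ℝ × ℝ) : ℝ := 1 / 4 - (n : ℝ) * |x.2|

/-- The comparison function `ψ_ε(x) = min(ψ⁺(x), 4εn²x₁² + 1/4 − ε)`. -/
noncomputable def psiEps (n : ℕ) (ε : ℝ) (x : ℝ × ℝ) : ℝ :=
  min (psiPlus n x) (4 * ε * (n : ℝ) ^ 2 * x.1 ^ 2 + 1 / 4 - ε)

/-- The lens-shaped region `S_ε = {x ∈ Q : |x₂| ≤ (ε/n)(1 − 4n²x₁²)}`. -/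
def Sset (n : ℕ) (ε : ℝ) : Set (ℝ × ℝ) :=
  {x | x ∈ Qset n ∧ |x.2| ≤ (ε / n) * (1 - 4 * (n : ℝ) ^ 2 * x.1 ^ 2)}

/-- The gradient `∇ψ(x) = (∂₁ψ(x), ∂₂ψ(x))` (junk value `0` where `ψ` is not
differentiable; a Lipschitz function is differentiable a.e.). -/
noncomputable def grad (ψ : ℝ × ℝ → ℝ) (x : ℝ × ℝ) : ℝ × ℝ :=
  (fderiv ℝ ψ x (1, 0), fderiv ℝ ψ x (0, 1))

/-! ### Auxiliary lemmas -/

lemma grad_congr {f g : ℝ × ℝ → ℝ} {x : ℝ × ℝ} (h : f =ᶠ[nhds x] g) :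
    grad f x = grad g x := by
  unfold grad; rw [h.fderiv_eq]

lemma grad_affine2 (a b : ℝ) (x : ℝ × ℝ) :
    grad (fun y : ℝ × ℝ => a - b * y.2) x = (0, -b) := by
  have h : HasFDerivAt (fun y : ℝ × ℝ => a - b * y.2)
      (-(b • ContinuousLinearMap.snd ℝ ℝ ℝ)) x :=
    ((hasFDerivAt_snd (𝕜 := ℝ) (p := x)).const_mul b).const_sub a
  unfold grad
  rw [h.fderiv]
  simp

lemma grad_quad (c a b : ℝ) (x : ℝ × ℝ) :
    grad (fun y : ℝ × ℝ => c * y.1 ^ 2 + a - b) x = (2 * c * x.1, 0) := by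
  have h1 : HasFDerivAt (fun y : ℝ × ℝ => c * (y.1 * y.1) + a - b)
      (c • (x.1 • ContinuousLinearMap.fst ℝ ℝ ℝ + x.1 • ContinuousLinearMap.fst ℝ ℝ ℝ)) x :=
    ((((hasFDerivAt_fst (𝕜 := ℝ) (p := x)).mul
        (hasFDerivAt_fst (𝕜 := ℝ) (p := x))).const_mul c).add_const a).sub_const b
  have h2 : (fun y : ℝ × ℝ => c * y.1 ^ 2 + a - b)
      = fun y : ℝ × ℝ => c * (y.1 * y.1) + a - b := by
    funext y; ring
  unfold grad
  rw [h2, h1.fderiv]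
  simp
  ring

lemma continuous_psiPlus (n : ℕ) : Continuous (psiPlus n) := by
  unfold psiPlus
  exact continuous_const.sub (continuous_const.mul (continuous_abs.comp continuous_snd))

lemma continuous_quad (n : ℕ) (ε : ℝ) :
    Continuous (fun y : ℝ × ℝ => 4 * ε * (n : ℝ) ^ 2 * y.1 ^ 2 + 1 / 4 - ε) := by
  fun_prop

lemma grad_psiPlus_pos (n : ℕ) {x : ℝ × ℝ} (hx : 0 < x.2) :
    grad (psiPlus n) x = (0, -(n : ℝ)) := by
  have hmem : {y : ℝ × ℝ | 0 < y.2} ∈ nhds x :=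
    (isOpen_lt continuous_const continuous_snd).mem_nhds hx
  have h : psiPlus n =ᶠ[nhds x] fun y : ℝ × ℝ => 1 / 4 - (n : ℝ) * y.2 :=
    Filter.eventuallyEq_of_mem hmem fun y hy => by
      have : |y.2| = y.2 := abs_of_pos (show (0:ℝ) < y.2 from hy)
      simp [psiPlus, this]
  rw [grad_congr h, grad_affine2]

lemma grad_psiPlus_neg (n : ℕ) {x : ℝ × ℝ} (hx : x.2 < 0) :
    grad (psiPlus n) x = (0, (n : ℝ)) := by
  have hmem : {y : ℝ × ℝ | y.2 < 0} ∈ nhds x :=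
    (isOpen_lt continuous_snd continuous_const).mem_nhds hx
  have h : psiPlus n =ᶠ[nhds x] fun y : ℝ × ℝ => 1 / 4 - (-(n : ℝ)) * y.2 :=
    Filter.eventuallyEq_of_mem hmem fun y hy => by
      have : |y.2| = -y.2 := abs_of_neg (hy : y.2 < (0:ℝ))
      simp only [psiPlus, this]; ring
  rw [grad_congr h, grad_affine2]
  norm_num

lemma Qset_compact (n : ℕ) : IsCompact (Qset n) := by
  have hclosed : IsClosed (Qset n) :=
    isClosed_le (by fun_prop) continuous_const
  refine Metric.isCompact_of_isClosed_isBounded hclosed ?_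
  refine (Metric.isBounded_closedBall (x := (0 : ℝ × ℝ)) (r := 1 / (2 * n))).subset ?_
  intro x hx
  have h1 : 0 ≤ |x.1| := abs_nonneg _
  have h2 : 0 ≤ |x.2| := abs_nonneg _
  have hx' : |x.1| + |x.2| ≤ 1 / (2 * n) := hx
  simp only [Metric.mem_closedBall, dist_zero_right, Prod.norm_def, Real.norm_eq_abs]
  exact max_le (by linarith) (by linarith)

lemma Sset_closed (n : ℕ) (ε : ℝ) : IsClosed (Sset n ε) := by
  have h1 : IsClosed (Qset n) := isClosed_le (by fun_prop) continuous_const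
  have h2 : IsClosed {x : ℝ × ℝ | |x.2| ≤ (ε / n) * (1 - 4 * (n : ℝ) ^ 2 * x.1 ^ 2)} :=
    isClosed_le (by fun_prop) (by fun_prop)
  exact h1.inter h2

lemma Sset_subset (n : ℕ) (ε : ℝ) : Sset n ε ⊆ Qset n := fun _ hx => hx.1

lemma Sset_compact (n : ℕ) (ε : ℝ) : IsCompact (Sset n ε) :=
  (Qset_compact n).of_isClosed_subset (Sset_closed n ε) (Sset_subset n ε)

/-- The set where the two branches agree is null. -/
lemma null_eqset (n : ℕ) (hn : 1 ≤ n) (ε : ℝ) :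
    volume {x : ℝ × ℝ | psiPlus n x = 4 * ε * (n : ℝ) ^ 2 * x.1 ^ 2 + 1 / 4 - ε} = 0 := by
  set E := {x : ℝ × ℝ | psiPlus n x = 4 * ε * (n : ℝ) ^ 2 * x.1 ^ 2 + 1 / 4 - ε} with hE
  have hEm : MeasurableSet E := by
    have : IsClosed E := isClosed_eq (continuous_psiPlus n) (continuous_quad n ε)
    exact this.measurableSet
  rw [Measure.volume_eq_prod, Measure.measure_prod_null hEm]
  refine Filter.Eventually.of_forall fun a => ?_
  have hn0 : (n : ℝ) ≠ 0 := by
    have : (0:ℝ) < n := by exact_mod_cast hn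
    linarith
  set t : ℝ := (1 / 4 - (4 * ε * (n : ℝ) ^ 2 * a ^ 2 + 1 / 4 - ε)) / n with ht
  have hsub : (Prod.mk a ⁻¹' E) ⊆ {t, -t} := by
    intro y hy
    have hy' : 1 / 4 - (n : ℝ) * |y| = 4 * ε * (n : ℝ) ^ 2 * a ^ 2 + 1 / 4 - ε := hy
    have habs : |y| = t := by rw [ht]; field_simp; linarith
    rcases abs_choice y with h | h
    · left; rw [← habs, h]
    · right
      have : y = -|y| := by linarith [h]
      rw [this, habs]
      exact Set.mem_singleton _
  refine measure_mono_null hsub ?_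
  exact Set.Finite.measure_zero ((Set.finite_singleton (-t)).insert t) _

/-- The horizontal axis is null. -/
lemma null_axis : volume {x : ℝ × ℝ | x.2 = 0} = 0 := by
  have hm : MeasurableSet {x : ℝ × ℝ | x.2 = 0} :=
    (isClosed_eq continuous_snd continuous_const).measurableSet
  rw [Measure.volume_eq_prod, Measure.measure_prod_null hm]
  refine Filter.Eventually.of_forall fun a => ?_
  refine measure_mono_null (fun y hy => ?_) (Set.Finite.measure_zero (Set.finite_singleton (0:ℝ)) volume)
  simpa using hy

set_option maxHeartbeats 2000000 in
/-- `ψ_ε` is Lipschitz on `Q`, agrees with `ψ_∂Q` on `∂Q`, equals the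
parabolic branch exactly on `S_ε`, and for every continuous `σ`,
`∫_Q σ(∇ψ⁺) − ∫_Q σ(∇ψ_ε) = ∫_{S_ε} [(σ(0,n)+σ(0,−n))/2 − σ(8εn²x₁,0)]`. -/
theorem stmt_17 (n : ℕ) (hn : 1 ≤ n) (ε : ℝ) (hε0 : 0 < ε) (hε : ε ≤ 1 / 4) :
    (∃ K : NNReal, LipschitzOnWith K (psiEps n ε) (Qset n)) ∧
    (∀ x ∈ bdQ n, psiEps n ε x = psiBd n x) ∧
    (∀ x ∈ Qset n,
      (psiEps n ε x = 4 * ε * (n : ℝ) ^ 2 * x.1 ^ 2 + 1 / 4 - ε ↔ x ∈ Sset n ε)) ∧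
    ∀ σ : ℝ × ℝ → ℝ, Continuous σ →
      (∫ x in Qset n, σ (grad (psiPlus n) x)) - (∫ x in Qset n, σ (grad (psiEps n ε) x))
        = ∫ x in Sset n ε,
            ((σ (0, (n : ℝ)) + σ (0, -(n : ℝ))) / 2 - σ (8 * ε * (n : ℝ) ^ 2 * x.1, 0)) := by
  classical
  have hnR : (0:ℝ) < n := by exact_mod_cast hn
  have hn0 : (n:ℝ) ≠ 0 := ne_of_gt hnR
  refine ⟨?_, ?_, ?_, ?_⟩
  · -- Lipschitz
    refine ⟨n, ?_⟩
    rw [lipschitzOnWith_iff_dist_le_mul]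
    intro x hx y hy
    have hx1 : |x.1| + |x.2| ≤ 1/(2*(n:ℝ)) := hx
    have hy1 : |y.1| + |y.2| ≤ 1/(2*(n:ℝ)) := hy
    rw [Real.dist_eq, Prod.dist_eq, Real.dist_eq, Real.dist_eq]
    set D := max |x.1 - y.1| |x.2 - y.2| with hD
    have hD1 : |x.1 - y.1| ≤ D := le_max_left _ _
    have hD2 : |x.2 - y.2| ≤ D := le_max_right _ _
    have hD0 : 0 ≤ D := le_trans (abs_nonneg _) hD1
    have hcoe : ((n : NNReal) : ℝ) = (n : ℝ) := by simp
    rw [hcoe]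
    simp only [psiEps]
    refine le_trans (abs_min_sub_min_le_max _ _ _ _) (max_le ?_ ?_)
    · have e : psiPlus n x - psiPlus n y = (n:ℝ) * (|y.2| - |x.2|) := by
        simp only [psiPlus]; ring
      rw [e, abs_mul, abs_of_nonneg (le_of_lt hnR)]
      have h1 : |(|y.2| - |x.2|)| ≤ |y.2 - x.2| := abs_abs_sub_abs_le_abs_sub _ _
      have h2 : |y.2 - x.2| = |x.2 - y.2| := abs_sub_comm _ _
      nlinarith
    · have e : (4 * ε * (n:ℝ)^2 * x.1^2 + 1/4 - ε) - (4 * ε * (n:ℝ)^2 * y.1^2 + 1/4 - ε)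
          = (4 * ε * (n:ℝ)^2) * ((x.1 + y.1) * (x.1 - y.1)) := by ring
      rw [e, abs_mul]
      have hc : |4 * ε * (n:ℝ)^2| = 4 * ε * (n:ℝ)^2 := abs_of_nonneg (by positivity)
      rw [hc, abs_mul]
      have hxa : |x.1| ≤ 1/(2*(n:ℝ)) := by linarith [abs_nonneg x.2]
      have hya : |y.1| ≤ 1/(2*(n:ℝ)) := by linarith [abs_nonneg y.2]
      have h2npos : (0:ℝ) < 2 * (n:ℝ) := by positivity
      have hxyn : |x.1 + y.1| * (n:ℝ) ≤ 1 := by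
        nlinarith [(le_div_iff₀ h2npos).1 hxa, (le_div_iff₀ h2npos).1 hya,
          mul_le_mul_of_nonneg_right (abs_add_le x.1 y.1) (le_of_lt hnR)]
      have s0 : (0:ℝ) ≤ |x.1 + y.1| * (n:ℝ) := by positivity
      have s1 : |x.1 + y.1| * (n:ℝ) * |x.1 - y.1| ≤ 1 * D :=
        mul_le_mul hxyn hD1 (abs_nonneg _) zero_le_one
      have s2 : 4*ε*(n:ℝ) * (|x.1 + y.1| * (n:ℝ) * |x.1 - y.1|) ≤ 4*ε*(n:ℝ) * (1 * D) :=
        mul_le_mul_of_nonneg_left s1 (by positivity)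
      have s3 : 4*ε*(n:ℝ)*D ≤ (n:ℝ)*D := by
        nlinarith [mul_nonneg (by linarith : (0:ℝ) ≤ 1 - 4*ε)
          (mul_nonneg (le_of_lt hnR) hD0)]
      nlinarith [s2, s3]
  · -- boundary value
    intro x hx
    have hx' : |x.1| + |x.2| = 1/(2*(n:ℝ)) := hx
    have h1 : psiPlus n x = psiBd n x := by
      have e : |x.1| = 1/(2*(n:ℝ)) - |x.2| := by linarith
      simp only [psiBd, psiPlus]
      rw [e]
      field_simp
      ring
    have h2 : psiPlus n x ≤ 4*ε*(n:ℝ)^2*x.1^2 + 1/4 - ε := by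
      set t := (n:ℝ) * |x.1| with htdef
      have ht0 : 0 ≤ t := by positivity
      have ht1 : t ≤ 1/2 := by
        have hxa : |x.1| ≤ 1/(2*(n:ℝ)) := by linarith [abs_nonneg x.2]
        calc t ≤ (n:ℝ) * (1/(2*(n:ℝ))) := by nlinarith
        _ = 1/2 := by field_simp [mul_comm]
      have hx2 : (n:ℝ) * |x.2| = 1/2 - t := by
        have e : |x.2| = 1/(2*(n:ℝ)) - |x.1| := by linarith
        rw [e, htdef]
        field_simp
      have hsq : (n:ℝ)^2 * x.1^2 = t^2 := by
        rw [htdef, mul_pow, sq_abs]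
      simp only [psiPlus]
      rw [hx2]
      nlinarith [sq_nonneg (1/2 - t), mul_nonneg (by linarith : (0:ℝ) ≤ 1/4 - ε)
        (by nlinarith : (0:ℝ) ≤ 1 - 4*t^2)]
    rw [psiEps, min_eq_left h2, h1]
  · -- equality iff in S_ε
    intro x hx
    have hxQ : |x.1| + |x.2| ≤ 1/(2*(n:ℝ)) := hx
    constructor
    · intro h
      have hle : 4*ε*(n:ℝ)^2*x.1^2 + 1/4 - ε ≤ psiPlus n x := by
        by_contra hlt
        push_neg at hlt
        rw [psiEps, min_eq_left (le_of_lt hlt)] at h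
        linarith
      refine ⟨hx, ?_⟩
      rw [psiPlus] at hle
      rw [div_mul_eq_mul_div, le_div_iff₀ hnR]
      nlinarith
    · intro hS
      have h2 := hS.2
      rw [div_mul_eq_mul_div, le_div_iff₀ hnR] at h2
      rw [psiEps]
      refine min_eq_right ?_
      rw [psiPlus]
      nlinarith
  · -- the integral identity
    intro σ hσ
    have hQm : MeasurableSet (Qset n) :=
      (isClosed_le (by fun_prop) continuous_const).measurableSet
    have hSm : MeasurableSet (Sset n ε) := (Sset_closed n ε).measurableSet
    have hQfin : volume (Qset n) ≠ ⊤ := (Qset_compact n).measure_lt_top.ne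
    have hSfin : volume (Sset n ε) ≠ ⊤ := (Sset_compact n ε).measure_lt_top.ne
    set ap : ℝ := σ (0, (n:ℝ)) with hap
    set am : ℝ := σ (0, -(n:ℝ)) with ham
    set c8 : ℝ × ℝ → ℝ := fun x => σ (8 * ε * (n:ℝ)^2 * x.1, 0) with hc8
    set h₁ : ℝ × ℝ → ℝ := fun x => if 0 < x.2 then am else ap with hh1
    set h₂ : ℝ × ℝ → ℝ := fun x => if x ∈ Sset n ε then c8 x else h₁ x with hh2
    have hmeas1 : Measurable h₁ :=
      Measurable.ite (measurableSet_lt measurable_const measurable_snd)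
        measurable_const measurable_const
    have hc8cont : Continuous c8 := hσ.comp (by fun_prop)
    have hbd : ∀ x : ℝ × ℝ, ‖h₁ x‖ ≤ max ‖am‖ ‖ap‖ := by
      intro x
      by_cases h : 0 < x.2 <;> simp [hh1, h, le_max_left, le_max_right]
    have hint_h₁Q : IntegrableOn h₁ (Qset n) :=
      Measure.integrableOn_of_bounded hQfin hmeas1.aestronglyMeasurable
        (Filter.Eventually.of_forall hbd)
    have hint_h₁S : IntegrableOn h₁ (Sset n ε) :=
      Measure.integrableOn_of_bounded hSfin hmeas1.aestronglyMeasurable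
        (Filter.Eventually.of_forall hbd)
    have hint_c8Q : IntegrableOn c8 (Qset n) :=
      hc8cont.continuousOn.integrableOn_compact (Qset_compact n)
    have hint_c8S : IntegrableOn c8 (Sset n ε) :=
      hc8cont.continuousOn.integrableOn_compact (Sset_compact n ε)
    have hint_h₂Q : IntegrableOn h₂ (Qset n) := by
      have e : h₂ = fun x => Set.indicator (Sset n ε) c8 x
          + Set.indicator (Sset n ε)ᶜ h₁ x := by
        funext x
        by_cases hx : x ∈ Sset n ε <;> simp [hh2, hx]
      rw [e]
      exact (hint_c8Q.indicator hSm).add (hint_h₁Q.indicator hSm.compl)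
    have hae : ∀ᵐ x : ℝ × ℝ,
        x.2 ≠ 0 ∧ psiPlus n x ≠ 4*ε*(n:ℝ)^2*x.1^2 + 1/4 - ε := by
      have h1 := measure_eq_zero_iff_ae_notMem.mp null_axis
      have h2 := measure_eq_zero_iff_ae_notMem.mp (null_eqset n hn ε)
      filter_upwards [h1, h2] with x hx1 hx2
      exact ⟨hx1, hx2⟩
    have stepA : ∫ x in Qset n, σ (grad (psiPlus n) x) = ∫ x in Qset n, h₁ x := by
      refine setIntegral_congr_ae hQm ?_
      filter_upwards [hae] with x hx _
      rcases lt_or_gt_of_ne hx.1 with hneg | hpos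
      · rw [grad_psiPlus_neg n hneg]
        simp [hh1, not_lt.2 (le_of_lt hneg), hap]
      · rw [grad_psiPlus_pos n hpos]
        simp [hh1, hpos, ham]
    have stepB : ∫ x in Qset n, σ (grad (psiEps n ε) x) = ∫ x in Qset n, h₂ x := by
      refine setIntegral_congr_ae hQm ?_
      filter_upwards [hae] with x hx hxQ
      by_cases hxS : x ∈ Sset n ε
      · have h2 := hxS.2
        rw [div_mul_eq_mul_div, le_div_iff₀ hnR] at h2
        have hle : 4*ε*(n:ℝ)^2*x.1^2 + 1/4 - ε ≤ psiPlus n x := by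
          rw [psiPlus]; nlinarith
        have hlt : 4*ε*(n:ℝ)^2*x.1^2 + 1/4 - ε < psiPlus n x :=
          lt_of_le_of_ne hle fun hcontra => hx.2 hcontra.symm
        have hU : {y : ℝ × ℝ | 4*ε*(n:ℝ)^2*y.1^2 + 1/4 - ε < psiPlus n y} ∈ nhds x :=
          (isOpen_lt (continuous_quad n ε) (continuous_psiPlus n)).mem_nhds hlt
        have hEq : psiEps n ε =ᶠ[nhds x] fun y : ℝ × ℝ => 4*ε*(n:ℝ)^2*y.1^2 + 1/4 - ε :=
          Filter.eventuallyEq_of_mem hU fun y hy => min_eq_right (le_of_lt hy)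
        rw [grad_congr hEq, grad_quad]
        have hpair : ((2*(4*ε*(n:ℝ)^2)*x.1 : ℝ), (0:ℝ)) = ((8*ε*(n:ℝ)^2*x.1 : ℝ), (0:ℝ)) := by
          rw [Prod.mk.injEq]
          constructor
          · ring
          · rfl
        rw [hpair]
        simp [hh2, hxS, hc8]
      · have hxQ' : |x.1| + |x.2| ≤ 1/(2*(n:ℝ)) := hxQ
        have hnot : ¬ |x.2| ≤ (ε/(n:ℝ)) * (1 - 4*(n:ℝ)^2*x.1^2) := fun hc => hxS ⟨hxQ, hc⟩
        push_neg at hnot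
        rw [div_mul_eq_mul_div, div_lt_iff₀ hnR] at hnot
        have hlt : psiPlus n x < 4*ε*(n:ℝ)^2*x.1^2 + 1/4 - ε := by
          rw [psiPlus]; nlinarith
        have hV0 : IsOpen {y : ℝ × ℝ | psiPlus n y < 4*ε*(n:ℝ)^2*y.1^2 + 1/4 - ε} :=
          isOpen_lt (continuous_psiPlus n) (continuous_quad n ε)
        rcases lt_or_gt_of_ne hx.1 with hneg | hpos
        · have hV : {y : ℝ × ℝ | psiPlus n y < 4*ε*(n:ℝ)^2*y.1^2 + 1/4 - ε}
              ∩ {y : ℝ × ℝ | y.2 < 0} ∈ nhds x :=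
            (hV0.inter (isOpen_lt continuous_snd continuous_const)).mem_nhds ⟨hlt, hneg⟩
          have hEq : psiEps n ε =ᶠ[nhds x] fun y : ℝ × ℝ => 1/4 - (-(n:ℝ)) * y.2 :=
            Filter.eventuallyEq_of_mem hV fun y hy => by
              have e1 : psiEps n ε y = psiPlus n y := min_eq_left (le_of_lt hy.1)
              have e2 : |y.2| = -y.2 := abs_of_neg hy.2
              rw [e1, psiPlus, e2]; ring
          rw [grad_congr hEq, grad_affine2]
          simp [hh2, hxS, hh1, not_lt.2 (le_of_lt hneg), hap]
        · have hV : {y : ℝ × ℝ | psiPlus n y < 4*ε*(n:ℝ)^2*y.1^2 + 1/4 - ε}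
              ∩ {y : ℝ × ℝ | 0 < y.2} ∈ nhds x :=
            (hV0.inter (isOpen_lt continuous_const continuous_snd)).mem_nhds ⟨hlt, hpos⟩
          have hEq : psiEps n ε =ᶠ[nhds x] fun y : ℝ × ℝ => 1/4 - (n:ℝ) * y.2 :=
            Filter.eventuallyEq_of_mem hV fun y hy => by
              have e1 : psiEps n ε y = psiPlus n y := min_eq_left (le_of_lt hy.1)
              have e2 : |y.2| = y.2 := abs_of_pos hy.2
              rw [e1, psiPlus, e2]
          rw [grad_congr hEq, grad_affine2]
          simp [hh2, hxS, hh1, hpos, ham]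
    -- the measure symmetry computation
    have hmain : ∫ x in Sset n ε, h₁ x
        = (volume (Sset n ε)).toReal • ((ap + am)/2) := by
      set A := Sset n ε ∩ {x : ℝ × ℝ | 0 < x.2} with hA
      set B := Sset n ε ∩ {x : ℝ × ℝ | x.2 ≤ 0} with hB
      have hAm : MeasurableSet A := hSm.inter (measurableSet_lt measurable_const measurable_snd)
      have hBm : MeasurableSet B := hSm.inter (measurableSet_le measurable_snd measurable_const)
      have hun : Sset n ε = A ∪ B := by
        rw [hA, hB, ← Set.inter_union_distrib_left]
        have : {x : ℝ × ℝ | 0 < x.2} ∪ {x : ℝ × ℝ | x.2 ≤ 0} = Set.univ := by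
          ext x
          simp [lt_or_ge 0 x.2]
        rw [this, Set.inter_univ]
      have hdisj : Disjoint A B := by
        refine Set.disjoint_left.mpr fun x hxA hxB => ?_
        simp only [hA, hB, Set.mem_inter_iff, Set.mem_setOf_eq] at hxA hxB
        linarith [hxA.2, hxB.2]
      have hT : MeasurePreserving (fun x : ℝ × ℝ => (x.1, -x.2)) volume volume := by
        have h := (MeasurePreserving.id (volume : Measure ℝ)).prod
          (Measure.measurePreserving_neg (volume : Measure ℝ))
        have e : (Prod.map (id : ℝ → ℝ) (Neg.neg : ℝ → ℝ)) = fun x : ℝ × ℝ => (x.1, -x.2) := by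
          funext x; simp [Prod.map]
        rw [e] at h
        rw [Measure.volume_eq_prod]
        exact h
      have hSrefl : ∀ x : ℝ × ℝ, ((x.1, -x.2) ∈ Sset n ε ↔ x ∈ Sset n ε) := by
        intro x; simp [Sset, Qset, abs_neg]
      have hpre : (fun x : ℝ × ℝ => (x.1, -x.2)) ⁻¹' A = Sset n ε ∩ {x : ℝ × ℝ | x.2 < 0} := by
        ext x
        simp only [Set.mem_preimage, hA, Set.mem_inter_iff, Set.mem_setOf_eq, hSrefl x, neg_pos]
      have hvolAB : volume A = volume B := by
        have h1 : volume ((fun x : ℝ × ℝ => (x.1, -x.2)) ⁻¹' A) = volume A :=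
          hT.measure_preimage hAm.nullMeasurableSet
        rw [hpre] at h1
        have h2 : volume B = volume (Sset n ε ∩ {x : ℝ × ℝ | x.2 < 0}) := by
          have e : B = (Sset n ε ∩ {x : ℝ × ℝ | x.2 = 0})
              ∪ (Sset n ε ∩ {x : ℝ × ℝ | x.2 < 0}) := by
            ext x
            simp only [hB, Set.mem_inter_iff, Set.mem_setOf_eq, Set.mem_union, le_iff_lt_or_eq]
            tauto
          have hnull : volume (Sset n ε ∩ {x : ℝ × ℝ | x.2 = 0}) = 0 :=
            measure_mono_null Set.inter_subset_right null_axis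
          refine le_antisymm ?_ (measure_mono ?_)
          · rw [e]
            refine le_trans (measure_union_le _ _) ?_
            rw [hnull, zero_add]
          · rintro x ⟨hxS, hxlt⟩
            exact ⟨hxS, show x.2 ≤ 0 from le_of_lt hxlt⟩
        rw [h2, ← h1]
      have hvolS : volume (Sset n ε) = volume A + volume B := by
        rw [hun, measure_union hdisj hBm]
      have hAfin : volume A ≠ ⊤ :=
        ne_top_of_le_ne_top hSfin (measure_mono Set.inter_subset_left)
      have hBfin : volume B ≠ ⊤ :=
        ne_top_of_le_ne_top hSfin (measure_mono Set.inter_subset_left)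
      have htor : (volume (Sset n ε)).toReal = (volume A).toReal + (volume B).toReal := by
        rw [hvolS, ENNReal.toReal_add hAfin hBfin]
      have hIA : ∫ x in A, h₁ x = (volume A).toReal • am := by
        rw [setIntegral_congr_fun hAm (g := fun _ => am)
          (fun x hx => by have h : 0 < x.2 := hx.2; simp [hh1, h]),
          setIntegral_const]
        rfl
      have hIB : ∫ x in B, h₁ x = (volume B).toReal • ap := by
        rw [setIntegral_congr_fun hBm (g := fun _ => ap)
          (fun x hx => by have h : x.2 ≤ 0 := hx.2; simp [hh1, not_lt.2 h]),
          setIntegral_const]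
        rfl
      have htRe : (volume A).toReal = (volume B).toReal := by rw [hvolAB]
      rw [hun, setIntegral_union hdisj hBm
        (hint_h₁S.mono_set (hun ▸ Set.subset_union_left))
        (hint_h₁S.mono_set (hun ▸ Set.subset_union_right)), hIA, hIB, ← hun, htor, htRe]
      simp only [smul_eq_mul]
      ring
    have e4 : ∫ x in Sset n ε, ((ap + am)/2 - c8 x)
        = (volume (Sset n ε)).toReal • ((ap + am)/2) - ∫ x in Sset n ε, c8 x := by
      rw [integral_sub (integrableOn_const (C := (ap + am)/2) hSfin) hint_c8S,
        setIntegral_const]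
      rfl
    have key : (∫ x in Qset n, h₁ x) - ∫ x in Qset n, h₂ x
        = ∫ x in Sset n ε, ((ap + am)/2 - c8 x) := by
      have e1 : (∫ x in Qset n, h₁ x) - ∫ x in Qset n, h₂ x
          = ∫ x in Qset n, (h₁ x - h₂ x) := (integral_sub hint_h₁Q hint_h₂Q).symm
      have hsub1 : ∀ x, h₁ x - h₂ x
          = Set.indicator (Sset n ε) (fun x => h₁ x - c8 x) x := by
        intro x
        by_cases hx : x ∈ Sset n ε <;> simp [hh2, hx]
      have e2 : ∫ x in Qset n, (h₁ x - h₂ x) = ∫ x in Sset n ε, (h₁ x - c8 x) := by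
        simp_rw [hsub1]
        rw [setIntegral_indicator hSm,
          Set.inter_eq_self_of_subset_right (Sset_subset n ε)]
      rw [e1, e2, integral_sub hint_h₁S hint_c8S, hmain, e4]
    rw [stepA, stepB, key]
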